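/- Let K be a symmetric convex body in ℝⁿ (K = −K), let x, y ∈ ℝⁿ, and b > 0. Then (cos θ)·x + b(sin θ)·y ∈ K for all θ ∈ ℝ if and only if ⟨x,w⟩² + b²·⟨y,w⟩² ≤ 1 for all w ∈ K*. -/

import Mathlib

/-- A convex body in ℝⁿ: a compact convex set with nonempty interior. -/
def IsConvexBody {n : ℕ} (K : Set (EuclideanSpace ℝ (Fin n))) : Prop :=
  IsCompact K ∧ Convex ℝ K ∧ (interior K).Nonempty

/-- The polar `K* = { w : ⟨z, w⟩ ≤ 1 for all z ∈ K }`. -/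
def polarSet {n : ℕ} (K : Set (EuclideanSpace ℝ (Fin n))) : Set (EuclideanSpace ℝ (Fin n)) :=
  { w | ∀ z ∈ K, (inner ℝ z w : ℝ) ≤ 1 }

/-- For a symmetric convex body K, the centered ellipse θ ↦ (cos θ)•x + b(sin θ)•y lies in K
iff ⟨x,w⟩² + b²⟨y,w⟩² ≤ 1 for all w in the polar K*. -/
theorem stmt_16 {n : ℕ} (hn : 1 ≤ n) (K : Set (EuclideanSpace ℝ (Fin n)))
    (hK : IsConvexBody K) (hsym : K = -K) (x y : EuclideanSpace ℝ (Fin n))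
    (b : ℝ) (hb : 0 < b) :
    (∀ θ : ℝ, (Real.cos θ) • x + (b * Real.sin θ) • y ∈ K) ↔
      ∀ w ∈ polarSet K, (inner ℝ x w : ℝ) ^ 2 + b ^ 2 * (inner ℝ y w : ℝ) ^ 2 ≤ 1 := by
  obtain ⟨hKc, hKconv, hKint⟩ := hK
  have hinner : ∀ θ (w : EuclideanSpace ℝ (Fin n)),
      (inner ℝ ((Real.cos θ) • x + (b * Real.sin θ) • y) w : ℝ)
        = Real.cos θ * (inner ℝ x w : ℝ) + (b * Real.sin θ) * (inner ℝ y w : ℝ) := by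
    intro θ w
    rw [inner_add_left, real_inner_smul_left, real_inner_smul_left]
  constructor
  · intro h w hw
    obtain ⟨a, ha⟩ : ∃ a, (inner ℝ x w : ℝ) = a := ⟨_, rfl⟩
    obtain ⟨c, hc⟩ : ∃ c, b * (inner ℝ y w : ℝ) = c := ⟨_, rfl⟩
    have hbc : b ^ 2 * (inner ℝ y w : ℝ) ^ 2 = c ^ 2 := by rw [← hc]; ring
    rw [ha, hbc]
    rcases eq_or_ne (Complex.mk a c) 0 with h0 | h0
    · have ha0 : a = 0 := congrArg Complex.re h0
      have hc0 : c = 0 := congrArg Complex.im h0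
      rw [ha0, hc0]; norm_num
    · set θ := Complex.arg (Complex.mk a c) with hθ
      have hcos := Complex.cos_arg h0
      have hsin := Complex.sin_arg (Complex.mk a c)
      set r := ‖Complex.mk a c‖ with hr
      have hrpos : 0 < r := norm_pos_iff.mpr h0
      have hle : (inner ℝ ((Real.cos θ) • x + (b * Real.sin θ) • y) w : ℝ) ≤ 1 := hw _ (h θ)
      rw [hinner] at hle
      have habs : r ^ 2 = a ^ 2 + c ^ 2 := by
        rw [hr, Complex.sq_norm, Complex.normSq_mk]; ring
      have hre : (Complex.mk a c).re = a := rfl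
      have him : (Complex.mk a c).im = c := rfl
      rw [hre] at hcos; rw [him] at hsin
      have heq : Real.cos θ * (inner ℝ x w : ℝ) + b * Real.sin θ * (inner ℝ y w : ℝ)
          = (a ^ 2 + c ^ 2) / r := by
        rw [ha]
        have h1 : b * Real.sin θ * (inner ℝ y w : ℝ) = Real.sin θ * c := by rw [← hc]; ring
        rw [h1, hθ, hcos, hsin]
        field_simp
      rw [heq, div_le_one hrpos] at hle
      nlinarith
  · intro h θ
    by_contra hz
    set z := (Real.cos θ) • x + (b * Real.sin θ) • y with hzdef
    obtain ⟨f, u, hfu, huz⟩ := geometric_hahn_banach_closed_point hKconv hKc.isClosed hz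
    have hKne : K.Nonempty := hKint.mono interior_subset
    obtain ⟨k, hk⟩ := hKne
    have hnk : -k ∈ K := by rw [hsym]; simpa using hk
    have h0K : (0 : EuclideanSpace ℝ (Fin n)) ∈ K := by
      have := hKconv hk hnk (by norm_num : (0:ℝ) ≤ 1/2) (by norm_num : (0:ℝ) ≤ 1/2) (by norm_num)
      simpa using this
    have hupos : 0 < u := lt_of_le_of_lt (by simpa using (map_zero f).symm.le) (hfu 0 h0K)
    set v := (InnerProductSpace.toDual ℝ (EuclideanSpace ℝ (Fin n))).symm f with hv
    have hfv : ∀ p, f p = (inner ℝ v p : ℝ) := by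
      intro p; rw [hv]; exact (InnerProductSpace.toDual_symm_apply).symm
    set w := u⁻¹ • v with hw
    have hwpolar : w ∈ polarSet K := by
      intro p hp
      have hle := (hfu p hp).le
      rw [hfv] at hle
      rw [real_inner_comm, hw, real_inner_smul_left, inv_mul_eq_div, div_le_one hupos]
      exact hle
    have hzw : 1 < (inner ℝ z w : ℝ) := by
      have h2 := huz
      rw [hfv] at h2
      rw [real_inner_comm, hw, real_inner_smul_left, inv_mul_eq_div, lt_div_iff₀ hupos, one_mul]
      exact h2
    have hbound := h w hwpolar
    have key : (inner ℝ z w : ℝ) ^ 2 ≤ (inner ℝ x w : ℝ) ^ 2 + b ^ 2 * (inner ℝ y w : ℝ) ^ 2 := by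
      rw [hzdef, hinner]
      nlinarith [sq_nonneg (Real.cos θ * (b * (inner ℝ y w : ℝ)) - Real.sin θ * (inner ℝ x w : ℝ)),
        Real.sin_sq_add_cos_sq θ, sq_nonneg (inner ℝ x w : ℝ), sq_nonneg (b * (inner ℝ y w : ℝ))]
    nlinarith
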